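/- Let q be an odd prime, d ≥ 2, and E ⊆ F_q^d with #E ≥ C·q^{(d+1)/2} for a sufficiently large absolute constant C. Then the distance set Δ(E) = {|x−y|² : x,y ∈ E} satisfies #Δ(E) ≥ c·q for an absolute constant c > 0. -/

import Mathlib

open Finset

namespace Stmt18Aux

/-- An additive character turns finite sums into finite products. -/
lemma addChar_sum {A ι : Type*} [AddCommMonoid A] (ψ : AddChar A ℂ) (s : Finset ι) (f : ι → A) :
    ψ (∑ i ∈ s, f i) = ∏ i ∈ s, ψ (f i) := by
  classical
  induction s using Finset.cons_induction with
  | empty => simp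
  | cons a s ha ih => rw [Finset.sum_cons, Finset.prod_cons, AddChar.map_add_eq_mul, ih]

variable {q : ℕ} [NeZero q]

/-- Orthogonality of the standard character of `ZMod q`. -/
lemma orth1 (a : ZMod q) :
    ∑ s : ZMod q, ZMod.stdAddChar (s * a) = if a = 0 then (q : ℂ) else 0 := by
  classical
  have h := AddChar.sum_mulShift (ψ := (ZMod.stdAddChar : AddChar (ZMod q) ℂ)) a
    (ZMod.isPrimitive_stdAddChar q)
  rw [ZMod.card] at h
  rw [h]
  split_ifs <;> simp

/-- Conjugation of a character value. -/
lemma conj_psi (a : ZMod q) :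
    (starRingEnd ℂ) (ZMod.stdAddChar a) = ZMod.stdAddChar (-a) := by
  have h0 : 0 < ringChar (ZMod q) := by
    rw [ZMod.ringChar_zmod_n]; exact Nat.pos_of_ne_zero (NeZero.ne q)
  rw [AddChar.starComp_apply h0, AddChar.inv_apply]

lemma abs_psi (a : ZMod q) : ‖ZMod.stdAddChar a‖ = 1 := by
  rw [ZMod.stdAddChar_apply]; exact Circle.norm_coe _

/-- Multidimensional orthogonality. -/
lemma orthd {d : ℕ} (c : Fin d → ZMod q) :
    ∑ x : Fin d → ZMod q, ZMod.stdAddChar (∑ i, x i * c i)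
      = if c = 0 then (q : ℂ) ^ d else 0 := by
  classical
  have h : ∀ x : Fin d → ZMod q,
      ZMod.stdAddChar (∑ i, x i * c i) = ∏ i, ZMod.stdAddChar (x i * c i) := fun x =>
    addChar_sum _ _ _
  simp_rw [h]
  rw [← Fintype.piFinset_univ, ← Finset.prod_univ_sum (fun _ => (univ : Finset (ZMod q))) (fun i u => ZMod.stdAddChar (u * c i))]
  simp_rw [orth1]
  by_cases hc : c = 0
  · simp [hc, ZMod.card]
  · rw [if_neg hc]
    obtain ⟨i, hi⟩ : ∃ i, c i ≠ 0 := by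
      by_contra hall
      push_neg at hall
      exact hc (funext fun i => hall i)
    exact Finset.prod_eq_zero (Finset.mem_univ i) (by rw [if_neg hi])

variable {d : ℕ}

/-- Plancherel-type identity for the distance counting function. -/
lemma fourier_ident (E : Finset (Fin d → ZMod q)) :
    (q : ℝ) * ∑ t : ZMod q,
        ((((E ×ˢ E).filter fun p => (∑ i, (p.1 i - p.2 i) ^ 2) = t).card : ℝ)) ^ 2
      = ∑ s : ZMod q,
          Complex.normSq (∑ p ∈ E ×ˢ E, ZMod.stdAddChar (s * ∑ i, (p.1 i - p.2 i) ^ 2)) := by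
  classical
  set D : (Fin d → ZMod q) × (Fin d → ZMod q) → ZMod q :=
    fun p => ∑ i, (p.1 i - p.2 i) ^ 2 with hD
  set ν : ZMod q → ℕ := fun t => ((E ×ˢ E).filter fun p => D p = t).card with hν
  set F : ZMod q → ℂ := fun s => ∑ p ∈ E ×ˢ E, ZMod.stdAddChar (s * D p) with hF
  have hFt : ∀ s, F s = ∑ t : ZMod q, (ν t : ℂ) * ZMod.stdAddChar (s * t) := by
    intro s
    rw [hF]
    dsimp only
    rw [← Finset.sum_fiberwise (E ×ˢ E) D (fun p => ZMod.stdAddChar (s * D p))]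
    refine Finset.sum_congr rfl fun t _ => ?_
    rw [Finset.sum_congr rfl (fun p hp => by rw [(Finset.mem_filter.mp hp).2]),
      Finset.sum_const, nsmul_eq_mul]
  have hC : ∑ s : ZMod q, F s * (starRingEnd ℂ) (F s)
      = (q : ℂ) * ∑ t : ZMod q, (ν t : ℂ) ^ 2 := by
    have step1 : ∀ s : ZMod q, F s * (starRingEnd ℂ) (F s)
        = ∑ t : ZMod q, ∑ u : ZMod q, (ν t : ℂ) * (ν u : ℂ)
            * ZMod.stdAddChar (s * (t - u)) := by
      intro s
      rw [hFt, map_sum, Finset.sum_mul_sum]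
      refine Finset.sum_congr rfl fun t _ => Finset.sum_congr rfl fun u _ => ?_
      rw [map_mul (starRingEnd ℂ) ((ν u : ℂ)) (ZMod.stdAddChar (s * u)), conj_psi,
        map_natCast (starRingEnd ℂ), mul_mul_mul_comm, ← AddChar.map_add_eq_mul]
      congr 2
      ring
    rw [Finset.sum_congr rfl fun s _ => step1 s, Finset.sum_comm]
    have step2 : ∀ t : ZMod q,
        ∑ s : ZMod q, ∑ u : ZMod q,
            (ν t : ℂ) * (ν u : ℂ) * ZMod.stdAddChar (s * (t - u))
          = (ν t : ℂ) ^ 2 * q := by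
      intro t
      rw [Finset.sum_comm]
      have inner : ∀ u : ZMod q,
          ∑ s : ZMod q, (ν t : ℂ) * (ν u : ℂ) * ZMod.stdAddChar (s * (t - u))
            = (ν t : ℂ) * (ν u : ℂ) * (if t - u = 0 then (q : ℂ) else 0) := by
        intro u
        rw [← Finset.mul_sum, orth1]
      rw [Finset.sum_congr rfl fun u _ => inner u]
      rw [Finset.sum_eq_single_of_mem t (Finset.mem_univ t)
        (fun u _ hu => by rw [if_neg (fun h => hu (sub_eq_zero.mp h).symm), mul_zero])]
      rw [if_pos (sub_self t)]
      ring
    rw [Finset.sum_congr rfl fun t _ => step2 t, ← Finset.sum_mul]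
    ring
  have hC' : ∑ s : ZMod q, (Complex.normSq (F s) : ℂ)
      = (q : ℂ) * ∑ t : ZMod q, (ν t : ℂ) ^ 2 := by
    rw [← hC]
    exact Finset.sum_congr rfl fun s _ => (Complex.mul_conj (F s)).symm
  exact_mod_cast hC'.symm

/-- The key character sum bound: for `s ≠ 0`,
`|∑_{x,y ∈ E} ψ(s‖x-y‖²)|² ≤ |E|² q^d`. -/
lemma Fbound [Fact q.Prime] (h2 : (2 : ZMod q) ≠ 0) (E : Finset (Fin d → ZMod q))
    {s : ZMod q} (hs : s ≠ 0) :
    Complex.normSq (∑ p ∈ E ×ˢ E, ZMod.stdAddChar (s * ∑ i, (p.1 i - p.2 i) ^ 2))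
      ≤ (E.card : ℝ) ^ 2 * (q : ℝ) ^ d := by
  classical
  set ψ := (ZMod.stdAddChar : AddChar (ZMod q) ℂ) with hψ
  set a : (Fin d → ZMod q) → ZMod q := fun x => ∑ i, x i ^ 2 with ha
  set G : (Fin d → ZMod q) → ℂ :=
    fun x => ∑ y ∈ E, ψ (s * a y - 2 * s * ∑ i, x i * y i) with hG
  have hsplit : (∑ p ∈ E ×ˢ E, ψ (s * ∑ i, (p.1 i - p.2 i) ^ 2))
      = ∑ x ∈ E, ψ (s * a x) * G x := by
    rw [Finset.sum_product]
    refine Finset.sum_congr rfl fun x _ => ?_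
    rw [hG]
    dsimp only
    rw [Finset.mul_sum]
    refine Finset.sum_congr rfl fun y _ => ?_
    rw [← AddChar.map_add_eq_mul]
    congr 1
    have expand : (∑ i, (x i - y i) ^ 2) = a x + a y - 2 * ∑ i, x i * y i := by
      rw [ha]
      dsimp only
      rw [Finset.mul_sum, ← Finset.sum_add_distrib, ← Finset.sum_sub_distrib]
      exact Finset.sum_congr rfl fun i _ => by ring
    rw [expand]
    ring
  have habs : ‖∑ x ∈ E, ψ (s * a x) * G x‖ ≤ ∑ x ∈ E, ‖G x‖ := by
    refine (norm_sum_le _ _).trans (le_of_eq ?_)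
    refine Finset.sum_congr rfl fun x _ => ?_
    rw [norm_mul, abs_psi, one_mul]
  -- second moment of G
  have hG2 : ∑ x : Fin d → ZMod q, (Complex.normSq (G x) : ℝ)
      = (q : ℝ) ^ d * E.card := by
    have hns : -(2 * s) ≠ 0 := neg_ne_zero.mpr (mul_ne_zero h2 hs)
    have hcond : ∀ y y' : Fin d → ZMod q,
        ((fun i => -(2 * s) * (y i - y' i)) = 0) ↔ y = y' := by
      intro y y'
      constructor
      · intro h
        funext i
        have := congrFun h i
        simp only [Pi.zero_apply, mul_eq_zero] at this
        rcases this with h' | h'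
        · exact absurd h' hns
        · exact sub_eq_zero.mp h'
      · rintro rfl
        funext i
        simp
    have hCx : ∑ x : Fin d → ZMod q, G x * (starRingEnd ℂ) (G x)
        = (q : ℂ) ^ d * E.card := by
      have expand : ∀ x : Fin d → ZMod q, G x * (starRingEnd ℂ) (G x)
          = ∑ y ∈ E, ∑ y' ∈ E, ψ (s * a y - s * a y')
              * ψ (∑ i, x i * (-(2 * s) * (y i - y' i))) := by
        intro x
        rw [hG]
        dsimp only
        rw [map_sum, Finset.sum_mul_sum]
        refine Finset.sum_congr rfl fun y _ => Finset.sum_congr rfl fun y' _ => ?_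
        rw [conj_psi, ← AddChar.map_add_eq_mul, ← AddChar.map_add_eq_mul]
        congr 1
        have hsum : ∑ i, x i * (-(2 * s) * (y i - y' i))
            = -(2 * s) * ∑ i, x i * y i + (2 * s) * ∑ i, x i * y' i := by
          rw [Finset.mul_sum, Finset.mul_sum, ← Finset.sum_add_distrib]
          exact Finset.sum_congr rfl fun i _ => by ring
        rw [hsum]
        ring
      rw [Finset.sum_congr rfl fun x _ => expand x, Finset.sum_comm]
      have step : ∀ y : Fin d → ZMod q, y ∈ E →
          ∑ x : Fin d → ZMod q, ∑ y' ∈ E, ψ (s * a y - s * a y')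
              * ψ (∑ i, x i * (-(2 * s) * (y i - y' i)))
            = (q : ℂ) ^ d := by
        intro y hy
        rw [Finset.sum_comm]
        have inner : ∀ y' : Fin d → ZMod q,
            ∑ x : Fin d → ZMod q, ψ (s * a y - s * a y')
                * ψ (∑ i, x i * (-(2 * s) * (y i - y' i)))
              = ψ (s * a y - s * a y') * (if y = y' then (q : ℂ) ^ d else 0) := by
          intro y'
          rw [← Finset.mul_sum, orthd (fun i => -(2 * s) * (y i - y' i)),
            if_congr (hcond y y') rfl rfl]
        rw [Finset.sum_congr rfl fun y' _ => inner y']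
        rw [Finset.sum_eq_single_of_mem y hy
          (fun y' _ hy' => by rw [if_neg (fun h => hy' h.symm), mul_zero])]
        rw [if_pos rfl, sub_self, AddChar.map_zero_eq_one, one_mul]
      rw [Finset.sum_congr rfl step, Finset.sum_const, nsmul_eq_mul]
      ring
    have : ∑ x : Fin d → ZMod q, (Complex.normSq (G x) : ℂ) = (q : ℂ) ^ d * E.card := by
      rw [← hCx]
      exact Finset.sum_congr rfl fun x _ => (Complex.mul_conj (G x)).symm
    exact_mod_cast this
  -- assemble via Cauchy-Schwarz
  have h1 : (∑ x ∈ E, ‖G x‖) ^ 2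
      ≤ (E.card : ℝ) * ∑ x ∈ E, ‖G x‖ ^ 2 :=
    sq_sum_le_card_mul_sum_sq
  have h3 : ∑ x ∈ E, ‖G x‖ ^ 2
      ≤ ∑ x : Fin d → ZMod q, ‖G x‖ ^ 2 :=
    Finset.sum_le_sum_of_subset_of_nonneg (Finset.subset_univ E)
      (fun _ _ _ => sq_nonneg _)
  have h4 : ∑ x : Fin d → ZMod q, ‖G x‖ ^ 2 = (q : ℝ) ^ d * E.card := by
    rw [← hG2]
    exact Finset.sum_congr rfl fun x _ => Complex.sq_norm (G x)
  rw [hsplit, ← Complex.sq_norm]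
  calc ‖∑ x ∈ E, ψ (s * a x) * G x‖ ^ 2
      ≤ (∑ x ∈ E, ‖G x‖) ^ 2 := by
        exact pow_le_pow_left₀ (norm_nonneg _) habs 2
    _ ≤ (E.card : ℝ) * ∑ x ∈ E, ‖G x‖ ^ 2 := h1
    _ ≤ (E.card : ℝ) * ((q : ℝ) ^ d * E.card) := by
        refine mul_le_mul_of_nonneg_left (h3.trans_eq h4) (by positivity)
    _ = (E.card : ℝ) ^ 2 * (q : ℝ) ^ d := by ring

end Stmt18Aux

/-- Finite-field Falconer theorem: if `#E ≳ q^{(d+1)/2}`, the distance set has size `≳ q`. -/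
theorem stmt_18 :
    ∃ C c : ℝ, 0 < C ∧ 0 < c ∧ ∀ (q : ℕ) [Fact q.Prime], Odd q → ∀ (d : ℕ), 2 ≤ d →
      ∀ E : Finset (Fin d → ZMod q),
        C * (q : ℝ) ^ (((d : ℝ) + 1) / 2) ≤ (E.card : ℝ) →
        c * (q : ℝ) ≤
          (((E ×ˢ E).image fun xy => ∑ i, (xy.1 i - xy.2 i) ^ 2).card : ℝ) := by
  classical
  refine ⟨2, 1/2, by norm_num, by norm_num, ?_⟩
  intro q hqp hodd d hd E hcard
  haveI : NeZero q := ⟨(Fact.out : q.Prime).ne_zero⟩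
  have hq2R : (2 : ℝ) ≤ q := by exact_mod_cast (Fact.out : q.Prime).two_le
  have hq0 : (0 : ℝ) < q := by linarith
  have hpow : (0 : ℝ) < (q : ℝ) ^ (((d : ℝ) + 1) / 2) := Real.rpow_pos_of_pos hq0 _
  have hE0 : (0 : ℝ) < E.card := lt_of_lt_of_le (by nlinarith) hcard
  have h2ne : (2 : ZMod q) ≠ 0 := by
    intro h
    have hdvd : q ∣ 2 := (ZMod.natCast_eq_zero_iff 2 q).mp (by exact_mod_cast h)
    have : q = 2 := (Nat.prime_dvd_prime_iff_eq (Fact.out) Nat.prime_two).mp hdvd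
    rw [this] at hodd
    exact (by decide : ¬ Odd 2) hodd
  -- squared form of the size hypothesis
  have hsq : 4 * (q : ℝ) ^ (d + 1) ≤ (E.card : ℝ) ^ 2 := by
    have hkey : ((q : ℝ) ^ (((d : ℝ) + 1) / 2)) ^ 2 = (q : ℝ) ^ (d + 1) := by
      rw [← Real.rpow_natCast ((q : ℝ) ^ (((d : ℝ) + 1) / 2)) 2, ← Real.rpow_mul hq0.le,
        ← Real.rpow_natCast (q : ℝ) (d + 1)]
      congr 1
      push_cast
      ring
    have h1 : (2 * (q : ℝ) ^ (((d : ℝ) + 1) / 2)) ^ 2 ≤ ((E.card : ℝ)) ^ 2 :=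
      pow_le_pow_left₀ (by positivity) hcard 2
    calc 4 * (q : ℝ) ^ (d + 1) = (2 * (q : ℝ) ^ (((d : ℝ) + 1) / 2)) ^ 2 := by
          rw [mul_pow, hkey]; norm_num
      _ ≤ (E.card : ℝ) ^ 2 := h1
  -- Cauchy-Schwarz over the distance set
  have hfib : (E ×ˢ E).card
      = ∑ t ∈ ((E ×ˢ E).image fun xy => ∑ i, (xy.1 i - xy.2 i) ^ 2),
          ((E ×ˢ E).filter fun p => (∑ i, (p.1 i - p.2 i) ^ 2) = t).card :=
    Finset.card_eq_sum_card_fiberwise (fun p hp => Finset.mem_image_of_mem _ hp)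
  have hsum1 : ((E.card : ℝ)) ^ 2
      = ∑ t ∈ ((E ×ˢ E).image fun xy => ∑ i, (xy.1 i - xy.2 i) ^ 2),
          ((((E ×ˢ E).filter fun p => (∑ i, (p.1 i - p.2 i) ^ 2) = t).card : ℝ)) := by
    have h := congrArg (fun n : ℕ => (n : ℝ)) hfib
    simp only [Finset.card_product, Nat.cast_mul, Nat.cast_sum] at h
    rw [sq]
    exact h
  have hCS : ((E.card : ℝ)) ^ 4
      ≤ (((E ×ˢ E).image fun xy => ∑ i, (xy.1 i - xy.2 i) ^ 2).card : ℝ)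
        * ∑ t ∈ ((E ×ˢ E).image fun xy => ∑ i, (xy.1 i - xy.2 i) ^ 2),
            ((((E ×ˢ E).filter fun p => (∑ i, (p.1 i - p.2 i) ^ 2) = t).card : ℝ)) ^ 2 := by
    calc ((E.card : ℝ)) ^ 4 = (((E.card : ℝ)) ^ 2) ^ 2 := by ring
      _ = (∑ t ∈ ((E ×ˢ E).image fun xy => ∑ i, (xy.1 i - xy.2 i) ^ 2),
            ((((E ×ˢ E).filter fun p => (∑ i, (p.1 i - p.2 i) ^ 2) = t).card : ℝ))) ^ 2 := by
          rw [hsum1]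
      _ ≤ _ := sq_sum_le_card_mul_sum_sq
  have hmono : ∑ t ∈ ((E ×ˢ E).image fun xy => ∑ i, (xy.1 i - xy.2 i) ^ 2),
          ((((E ×ˢ E).filter fun p => (∑ i, (p.1 i - p.2 i) ^ 2) = t).card : ℝ)) ^ 2
      ≤ ∑ t : ZMod q,
          ((((E ×ˢ E).filter fun p => (∑ i, (p.1 i - p.2 i) ^ 2) = t).card : ℝ)) ^ 2 :=
    Finset.sum_le_sum_of_subset_of_nonneg (Finset.subset_univ _) (fun _ _ _ => sq_nonneg _)
  -- Plancherel + the pointwise bound on character sums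
  have hident := Stmt18Aux.fourier_ident (q := q) (d := d) E
  have hF0 : (∑ p ∈ E ×ˢ E, ZMod.stdAddChar ((0 : ZMod q) * ∑ i, (p.1 i - p.2 i) ^ 2))
      = ((E.card * E.card : ℕ) : ℂ) := by
    simp [Finset.sum_const, Finset.card_product]
  have hFsum : ∑ s : ZMod q,
        Complex.normSq (∑ p ∈ E ×ˢ E, ZMod.stdAddChar (s * ∑ i, (p.1 i - p.2 i) ^ 2))
      ≤ (E.card : ℝ) ^ 4 + (q : ℝ) ^ (d + 1) * (E.card : ℝ) ^ 2 := by
    rw [← Finset.add_sum_erase _ _ (Finset.mem_univ (0 : ZMod q))]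
    have hterm0 : Complex.normSq
        (∑ p ∈ E ×ˢ E, ZMod.stdAddChar ((0 : ZMod q) * ∑ i, (p.1 i - p.2 i) ^ 2))
        = (E.card : ℝ) ^ 4 := by
      rw [hF0, Complex.normSq_natCast]
      push_cast
      ring
    have hrest : ∑ s ∈ (Finset.univ.erase (0 : ZMod q)),
        Complex.normSq (∑ p ∈ E ×ˢ E, ZMod.stdAddChar (s * ∑ i, (p.1 i - p.2 i) ^ 2))
        ≤ (q : ℝ) ^ (d + 1) * (E.card : ℝ) ^ 2 := by
      have hb : ∀ s ∈ Finset.univ.erase (0 : ZMod q),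
          Complex.normSq (∑ p ∈ E ×ˢ E, ZMod.stdAddChar (s * ∑ i, (p.1 i - p.2 i) ^ 2))
            ≤ (E.card : ℝ) ^ 2 * (q : ℝ) ^ d :=
        fun s hs => Stmt18Aux.Fbound h2ne E (Finset.ne_of_mem_erase hs)
      calc ∑ s ∈ (Finset.univ.erase (0 : ZMod q)),
            Complex.normSq (∑ p ∈ E ×ˢ E, ZMod.stdAddChar (s * ∑ i, (p.1 i - p.2 i) ^ 2))
          ≤ ((Finset.univ.erase (0 : ZMod q)).card : ℝ)
              * ((E.card : ℝ) ^ 2 * (q : ℝ) ^ d) := by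
            have := Finset.sum_le_card_nsmul _ _ _ hb
            rwa [nsmul_eq_mul] at this
        _ ≤ (q : ℝ) * ((E.card : ℝ) ^ 2 * (q : ℝ) ^ d) := by
            refine mul_le_mul_of_nonneg_right ?_ (by positivity)
            have h1 : (Finset.univ.erase (0 : ZMod q)).card ≤ (Finset.univ : Finset (ZMod q)).card :=
              Finset.card_le_card (Finset.erase_subset _ _)
            have h2 : (Finset.univ : Finset (ZMod q)).card = q := by
              rw [Finset.card_univ, ZMod.card]
            exact_mod_cast h1.trans_eq h2
        _ = (q : ℝ) ^ (d + 1) * (E.card : ℝ) ^ 2 := by rw [pow_succ]; ring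
    linarith [hterm0, hrest]
  -- put everything together
  have hS0 : (0 : ℝ) ≤ ∑ t : ZMod q,
      ((((E ×ˢ E).filter fun p => (∑ i, (p.1 i - p.2 i) ^ 2) = t).card : ℝ)) ^ 2 :=
    Finset.sum_nonneg fun _ _ => sq_nonneg _
  have hq5 : (q : ℝ) * ∑ t : ZMod q,
        ((((E ×ˢ E).filter fun p => (∑ i, (p.1 i - p.2 i) ^ 2) = t).card : ℝ)) ^ 2
      ≤ (5 / 4 : ℝ) * (E.card : ℝ) ^ 4 := by
    rw [hident]
    have hmul : (q : ℝ) ^ (d + 1) * (E.card : ℝ) ^ 2 ≤ (1 / 4 : ℝ) * (E.card : ℝ) ^ 4 := by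
      nlinarith [sq_nonneg ((E.card : ℝ))]
    linarith [hFsum]
  have hK0 : (0 : ℝ) ≤ (((E ×ˢ E).image fun xy => ∑ i, (xy.1 i - xy.2 i) ^ 2).card : ℝ) :=
    Nat.cast_nonneg _
  have hn4 : (0 : ℝ) < (E.card : ℝ) ^ 4 := by positivity
  have hfinal : (q : ℝ) * (E.card : ℝ) ^ 4
      ≤ ((5 / 4 : ℝ) * (((E ×ˢ E).image fun xy => ∑ i, (xy.1 i - xy.2 i) ^ 2).card : ℝ))
        * (E.card : ℝ) ^ 4 := by
    calc (q : ℝ) * (E.card : ℝ) ^ 4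
        ≤ (q : ℝ) * ((((E ×ˢ E).image fun xy => ∑ i, (xy.1 i - xy.2 i) ^ 2).card : ℝ)
            * ∑ t : ZMod q,
              ((((E ×ˢ E).filter fun p => (∑ i, (p.1 i - p.2 i) ^ 2) = t).card : ℝ)) ^ 2) := by
          refine mul_le_mul_of_nonneg_left (hCS.trans ?_) hq0.le
          exact mul_le_mul_of_nonneg_left hmono hK0
      _ = (((E ×ˢ E).image fun xy => ∑ i, (xy.1 i - xy.2 i) ^ 2).card : ℝ)
            * ((q : ℝ) * ∑ t : ZMod q,
              ((((E ×ˢ E).filter fun p => (∑ i, (p.1 i - p.2 i) ^ 2) = t).card : ℝ)) ^ 2) := by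
          ring
      _ ≤ (((E ×ˢ E).image fun xy => ∑ i, (xy.1 i - xy.2 i) ^ 2).card : ℝ)
            * ((5 / 4 : ℝ) * (E.card : ℝ) ^ 4) := mul_le_mul_of_nonneg_left hq5 hK0
      _ = _ := by ring
  have hqle : (q : ℝ)
      ≤ (5 / 4 : ℝ) * (((E ×ˢ E).image fun xy => ∑ i, (xy.1 i - xy.2 i) ^ 2).card : ℝ) :=
    le_of_mul_le_mul_right (by linarith [hfinal]) hn4
  linarith
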